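/- Let Y = {y₁, y₂, y₃}, π_ref uniform, μ(y₁)=μ(y₂)=1/2, μ(y₃)=0. Then every full-support policy π = (p, q, 1-p-q) with p/q = exp(τ^{-1}(p*(y₁≻μ) - p*(y₂≻μ))) is a global minimizer of L(π) = E_{y,y'~μ}[(h_π(y,y') - τ^{-1}(p*(y≻μ)-p*(y'≻μ)))²]; in particular the minimizer is not unique when Supp(μ) ⊊ Supp(π_ref). -/

import Mathlib

theorem stmt_19 (τ : ℝ) (hτ : 0 < τ)
    (p : Fin 3 → Fin 3 → ℝ) (hp01 : ∀ y y', 0 ≤ p y y' ∧ p y y' ≤ 1)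
    (hp : ∀ y y', p y y' + p y' y = 1)
    (μ : Fin 3 → ℝ) (hμ0 : μ 0 = 1 / 2) (hμ1 : μ 1 = 1 / 2) (hμ2 : μ 2 = 0)
    (πref : Fin 3 → ℝ) (href : ∀ y, πref y = 1 / 3)
    (pμ : Fin 3 → ℝ) (hpμ : ∀ y, pμ y = ∑ y', μ y' * p y y')
    (L : (Fin 3 → ℝ) → ℝ)
    (hL : ∀ π, L π = ∑ y, ∑ y', μ y * μ y' *
        (Real.log (π y * πref y' / (π y' * πref y)) - (pμ y - pμ y') / τ)^2) :
    (∀ π : Fin 3 → ℝ, (∀ y, 0 < π y) → ∑ y, π y = 1 →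
      π 0 / π 1 = Real.exp ((pμ 0 - pμ 1) / τ) →
      ∀ π' : Fin 3 → ℝ, (∀ y, 0 < π' y) → ∑ y, π' y = 1 → L π ≤ L π') ∧
    (∃ π₁ π₂ : Fin 3 → ℝ,
      ((∀ y, 0 < π₁ y) ∧ (∑ y, π₁ y = 1) ∧
        π₁ 0 / π₁ 1 = Real.exp ((pμ 0 - pμ 1) / τ)) ∧
      ((∀ y, 0 < π₂ y) ∧ (∑ y, π₂ y = 1) ∧
        π₂ 0 / π₂ 1 = Real.exp ((pμ 0 - pμ 1) / τ)) ∧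
      π₁ ≠ π₂) := by
  set d : ℝ := (pμ 0 - pμ 1) / τ with hd
  have key : ∀ π : Fin 3 → ℝ, (∀ y, 0 < π y) →
      L π = 1/2 * (Real.log (π 0 / π 1) - d)^2 := by
    intro π hπ
    have h0 := (hπ 0).ne'
    have h1 := (hπ 1).ne'
    rw [hL]
    simp only [Fin.sum_univ_three, hμ0, hμ1, hμ2, href]
    have e1 : π 0 * (1/3) / (π 1 * (1/3)) = π 0 / π 1 := by field_simp
    have e2 : π 1 * (1/3) / (π 0 * (1/3)) = π 1 / π 0 := by field_simp
    have e3 : π 0 * (1/3) / (π 0 * (1/3)) = 1 := by field_simp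
    have e4 : π 1 * (1/3) / (π 1 * (1/3)) = 1 := by field_simp
    rw [e1, e2, e3, e4, Real.log_one, Real.log_div h0 h1, Real.log_div h1 h0]
    ring
  constructor
  · intro π hπpos hπsum hπratio π' hπ'pos hπ'sum
    rw [key π hπpos, key π' hπ'pos, hπratio, Real.log_exp]
    simp
    positivity
  · have he : 0 < Real.exp d := Real.exp_pos d
    refine ⟨fun i => if i = 2 then 1/2 else if i = 0 then Real.exp d / (2 * (1 + Real.exp d))
        else 1 / (2 * (1 + Real.exp d)),
      fun i => if i = 2 then 1/4 else if i = 0 then 3 * Real.exp d / (4 * (1 + Real.exp d))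
        else 3 / (4 * (1 + Real.exp d)), ⟨?_, ?_, ?_⟩, ⟨?_, ?_, ?_⟩, ?_⟩
    · intro y; fin_cases y <;> simp <;> positivity
    · simp [Fin.sum_univ_three]; field_simp; ring
    · have h1e : (1:ℝ) + Real.exp d ≠ 0 := by positivity
      simp only [show (0:Fin 3) ≠ 2 by decide, show (1:Fin 3) ≠ 2 by decide, show (1:Fin 3) ≠ 0 by decide, if_neg, if_pos,
        reduceIte]
      field_simp
    · intro y; fin_cases y <;> simp <;> positivity
    · simp [Fin.sum_univ_three]; field_simp; ring
    · have h1e : (1:ℝ) + Real.exp d ≠ 0 := by positivity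
      simp only [show (0:Fin 3) ≠ 2 by decide, show (1:Fin 3) ≠ 2 by decide, show (1:Fin 3) ≠ 0 by decide, if_neg, if_pos,
        reduceIte]
      field_simp
    · intro h
      have := congrFun h 2
      simp at this
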